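/- For convex bodies K, L in ℝⁿ, the function f(x) = |K ∩ (x - L)|^{1/n} is concave on the Minkowski sum K + L. -/

import Mathlib

open MeasureTheory Set
open scoped Pointwise ENNReal


lemma sum_compact_1d {K C : Set ℝ} (hK : IsCompact K) (hC : IsCompact C)
    (hKne : K.Nonempty) (hCne : C.Nonempty) :
    volume K + volume C ≤ volume (K + C) := by
  set a := sSup K with ha
  set b := sInf C with hb
  have haK : a ∈ K := hK.sSup_mem hKne
  have hbC : b ∈ C := hC.sInf_mem hCne
  have hA : (a +ᵥ C) ⊆ K + C := by
    rintro x ⟨c, hc, rfl⟩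
    exact add_mem_add haK hc
  have hB : (b +ᵥ K) ⊆ K + C := by
    rintro x ⟨k, hk, rfl⟩
    exact ⟨k, hk, b, hbC, add_comm k b⟩
  have hdisj : Disjoint (a +ᵥ C) ((b +ᵥ K) \ {a + b}) := by
    rw [Set.disjoint_left]
    rintro x ⟨c, hc, rfl⟩ ⟨⟨k, hk, hkx⟩, hne⟩
    simp only [vadd_eq_add, mem_singleton_iff] at hne hkx ⊢
    have h1 : a + b ≤ a + c := by
      have := csInf_le hC.bddBelow hc
      linarith
    have h2 : b + k ≤ a + b := by
      have := le_csSup hK.bddAbove hk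
      linarith
    exact hne (by rw [← hkx] at h1 ⊢; linarith)
  calc volume K + volume C
      = volume (a +ᵥ C) + volume ((b +ᵥ K) \ {a + b}) := by
        rw [measure_vadd, measure_diff_null (measure_singleton _), measure_vadd, add_comm]
    _ = volume ((a +ᵥ C) ∪ ((b +ᵥ K) \ {a + b})) := (measure_union hdisj ((hK.measurableSet.const_vadd b).diff (measurableSet_singleton _))).symm
    _ ≤ volume (K + C) := measure_mono (union_subset hA (subset_trans diff_subset hB))

lemma sum_meas_1d {X Y : Set ℝ} (hX : MeasurableSet X) (hY : MeasurableSet Y)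
    (hXne : X.Nonempty) (hYne : Y.Nonempty) :
    volume X + volume Y ≤ volume (X + Y) := by
  obtain ⟨x₀, hx₀⟩ := hXne
  obtain ⟨y₀, hy₀⟩ := hYne
  by_cases hXi : volume X = ⊤
  · have : volume (X + Y) = ⊤ := by
      refine top_le_iff.mp ?_
      calc (⊤ : ℝ≥0∞) = volume X := hXi.symm
        _ = volume (y₀ +ᵥ X) := (measure_vadd _ _ _).symm
        _ ≤ volume (X + Y) := measure_mono (by rintro x ⟨k, hk, rfl⟩; exact ⟨k, hk, y₀, hy₀, add_comm k y₀⟩)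
    simp [this]
  by_cases hYi : volume Y = ⊤
  · have : volume (X + Y) = ⊤ := by
      refine top_le_iff.mp ?_
      calc (⊤ : ℝ≥0∞) = volume Y := hYi.symm
        _ = volume (x₀ +ᵥ Y) := (measure_vadd _ _ _).symm
        _ ≤ volume (X + Y) := measure_mono (by rintro x ⟨k, hk, rfl⟩; exact add_mem_add hx₀ hk)
    simp [this]
  refine ENNReal.le_of_forall_pos_le_add fun ε hε _ => ?_
  have hε2 : ((ε : ℝ≥0∞) / 2) ≠ 0 := by
    simp [ENNReal.div_eq_zero_iff, hε.ne']
  obtain ⟨K, hKX, hKc, hKv⟩ := hX.exists_isCompact_lt_add hXi hε2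
  obtain ⟨C, hCY, hCc, hCv⟩ := hY.exists_isCompact_lt_add hYi hε2
  have hsub : (K ∪ {x₀}) + (C ∪ {y₀}) ⊆ X + Y :=
    add_subset_add (union_subset hKX (by simpa using hx₀)) (union_subset hCY (by simpa using hy₀))
  have key : volume (K ∪ {x₀}) + volume (C ∪ {y₀}) ≤ volume ((K ∪ {x₀}) + (C ∪ {y₀})) :=
    sum_compact_1d (hKc.union isCompact_singleton) (hCc.union isCompact_singleton)
      (by simp) (by simp)
  have h1 : volume X ≤ volume (K ∪ {x₀}) + ε/2 :=
    le_trans hKv.le (add_le_add_left (measure_mono subset_union_left) _)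
  have h2 : volume Y ≤ volume (C ∪ {y₀}) + ε/2 :=
    le_trans hCv.le (add_le_add_left (measure_mono subset_union_left) _)
  calc volume X + volume Y
      ≤ (volume (K ∪ {x₀}) + ε/2) + (volume (C ∪ {y₀}) + ε/2) := add_le_add h1 h2
    _ = (volume (K ∪ {x₀}) + volume (C ∪ {y₀})) + (ε/2 + ε/2) := by ring
    _ = (volume (K ∪ {x₀}) + volume (C ∪ {y₀})) + ε := by rw [ENNReal.add_halves]
    _ ≤ volume ((K ∪ {x₀}) + (C ∪ {y₀})) + ε := add_le_add_left key _
    _ ≤ volume (X + Y) + ε := add_le_add_left (measure_mono hsub) _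

lemma ennreal_geom_le {t : ℝ} (ht0 : 0 < t) (ht1 : t < 1) (a b : ℝ≥0∞) :
    a ^ (1 - t) * b ^ t ≤ ENNReal.ofReal (1 - t) * a + ENNReal.ofReal t * b := by
  rcases eq_or_ne a ⊤ with rfl | ha
  · have : ENNReal.ofReal (1 - t) * (⊤:ℝ≥0∞) = ⊤ :=
      ENNReal.mul_top (by simp [ENNReal.ofReal_eq_zero]; linarith)
    simp [this]
  rcases eq_or_ne b ⊤ with rfl | hb
  · have : ENNReal.ofReal t * (⊤:ℝ≥0∞) = ⊤ :=
      ENNReal.mul_top (by simp [ENNReal.ofReal_eq_zero]; linarith)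
    simp [this]
  have h1t : (0:ℝ) ≤ 1 - t := by linarith
  rw [← ENNReal.ofReal_toReal ha, ← ENNReal.ofReal_toReal hb,
    ENNReal.ofReal_rpow_of_nonneg ENNReal.toReal_nonneg h1t,
    ENNReal.ofReal_rpow_of_nonneg ENNReal.toReal_nonneg ht0.le,
    ← ENNReal.ofReal_mul (Real.rpow_nonneg ENNReal.toReal_nonneg _),
    ← ENNReal.ofReal_mul h1t, ← ENNReal.ofReal_mul ht0.le,
    ← ENNReal.ofReal_add (by positivity) (by positivity)]
  exact ENNReal.ofReal_le_ofReal
    (Real.geom_mean_le_arith_mean2_weighted h1t ht0.le ENNReal.toReal_nonneg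
      ENNReal.toReal_nonneg (by ring))

lemma vol_smul_1d (c : ℝ) (X : Set ℝ) :
    volume (c • X) = ENNReal.ofReal |c| * volume X := by
  simpa using Measure.addHaar_smul (volume : Measure ℝ) c X

lemma ioi_eq_ioo_lintegral {k : ℝ → ℝ≥0∞} (hk : ∀ s, 1 ≤ s → k s = 0) :
    ∫⁻ s in Ioi (0:ℝ), k s = ∫⁻ s in Ioo (0:ℝ) 1, k s := by
  rw [← Ioo_union_Ici_eq_Ioi (zero_lt_one : (0:ℝ) < 1),
    lintegral_union measurableSet_Ici
      (Set.disjoint_left.mpr fun s hs h1 => absurd hs.2 (not_lt.mpr h1))]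
  have : ∫⁻ s in Ici (1:ℝ), k s = 0 := by
    rw [setLIntegral_congr_fun measurableSet_Ici (fun s hs => hk s hs)]
    simp
  rw [this, add_zero]

lemma pl1_norm {t : ℝ} (ht0 : 0 < t) (ht1 : t < 1) {f g h : ℝ → ℝ≥0∞}
    (hf : Measurable f) (hg : Measurable g) (hh : Measurable h)
    (hsf : (⨆ x, f x) = 1) (hsg : (⨆ x, g x) = 1)
    (hyp : ∀ x y, f x ^ (1 - t) * g y ^ t ≤ h ((1-t) • x + t • y)) :
    ENNReal.ofReal (1-t) * (∫⁻ x, f x) + ENNReal.ofReal t * (∫⁻ x, g x) ≤ ∫⁻ x, h x := by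
  have hf1 : ∀ x, f x ≤ 1 := fun x => hsf ▸ le_iSup f x
  have hg1 : ∀ x, g x ≤ 1 := fun x => hsg ▸ le_iSup g x
  set h' : ℝ → ℝ≥0∞ := fun x => min (h x) 1 with hh'def
  have hh' : Measurable h' := hh.min measurable_const
  have hh'1 : ∀ x, h' x ≤ 1 := fun x => min_le_right _ _
  have hyp' : ∀ x y, f x ^ (1-t) * g y ^ t ≤ h' ((1-t) • x + t • y) := by
    intro x y
    refine le_min (hyp x y) ?_
    have : f x ^ (1-t) * g y ^ t ≤ (1:ℝ≥0∞) ^ (1-t) * (1:ℝ≥0∞) ^ t :=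
      mul_le_mul' (ENNReal.rpow_le_rpow (hf1 x) (by linarith))
        (ENNReal.rpow_le_rpow (hg1 y) ht0.le)
    simpa using this
  -- real versions
  set F : ℝ → ℝ := fun x => (f x).toReal with hF
  set G : ℝ → ℝ := fun x => (g x).toReal with hG
  set H : ℝ → ℝ := fun x => (h' x).toReal with hH
  have hft : ∀ x, f x ≠ ⊤ := fun x => ((hf1 x).trans_lt (by simp)).ne
  have hgt : ∀ x, g x ≠ ⊤ := fun x => ((hg1 x).trans_lt (by simp)).ne
  have hht : ∀ x, h' x ≠ ⊤ := fun x => ((hh'1 x).trans_lt (by simp)).ne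
  have layerf : ∫⁻ x, f x = ∫⁻ s in Ioi (0:ℝ), volume {x | s < F x} := by
    rw [show (fun x => f x) = fun x => ENNReal.ofReal (F x) from
      funext fun x => (ENNReal.ofReal_toReal (hft x)).symm]
    exact lintegral_eq_lintegral_meas_lt volume (ae_of_all _ fun x => ENNReal.toReal_nonneg)
      (hf.ennreal_toReal).aemeasurable
  have layerg : ∫⁻ x, g x = ∫⁻ s in Ioi (0:ℝ), volume {x | s < G x} := by
    rw [show (fun x => g x) = fun x => ENNReal.ofReal (G x) from
      funext fun x => (ENNReal.ofReal_toReal (hgt x)).symm]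
    exact lintegral_eq_lintegral_meas_lt volume (ae_of_all _ fun x => ENNReal.toReal_nonneg)
      (hg.ennreal_toReal).aemeasurable
  have layerh : ∫⁻ x, h' x = ∫⁻ s in Ioi (0:ℝ), volume {x | s < H x} := by
    rw [show (fun x => h' x) = fun x => ENNReal.ofReal (H x) from
      funext fun x => (ENNReal.ofReal_toReal (hht x)).symm]
    exact lintegral_eq_lintegral_meas_lt volume (ae_of_all _ fun x => ENNReal.toReal_nonneg)
      (hh'.ennreal_toReal).aemeasurable
  have hFmeas : Measurable F := hf.ennreal_toReal
  have hGmeas : Measurable G := hg.ennreal_toReal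
  -- key slice inequality
  have key : ∀ s ∈ Ioo (0:ℝ) 1,
      ENNReal.ofReal (1-t) * volume {x | s < F x} + ENNReal.ofReal t * volume {x | s < G x}
        ≤ volume {x | s < H x} := by
    intro s hs
    obtain ⟨hs0, hs1⟩ := hs
    have hXmeas : MeasurableSet {x | s < F x} := measurableSet_lt measurable_const hFmeas
    have hYmeas : MeasurableSet {x | s < G x} := measurableSet_lt measurable_const hGmeas
    have hXne : {x | s < F x}.Nonempty := by
      have : ENNReal.ofReal s < ⨆ x, f x := by
        rw [hsf]; exact ENNReal.ofReal_lt_one.mpr hs1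
      obtain ⟨x, hx⟩ := lt_iSup_iff.mp this
      exact ⟨x, (ENNReal.ofReal_lt_iff_lt_toReal hs0.le (hft x)).mp hx⟩
    have hYne : {x | s < G x}.Nonempty := by
      have : ENNReal.ofReal s < ⨆ x, g x := by
        rw [hsg]; exact ENNReal.ofReal_lt_one.mpr hs1
      obtain ⟨x, hx⟩ := lt_iSup_iff.mp this
      exact ⟨x, (ENNReal.ofReal_lt_iff_lt_toReal hs0.le (hgt x)).mp hx⟩
    have hsub : (1-t) • {x | s < F x} + t • {x | s < G x} ⊆ {x | s < H x} := by
      rintro u ⟨-, ⟨x, hx, rfl⟩, -, ⟨y, hy, rfl⟩, rfl⟩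
      have hfx : ENNReal.ofReal s < f x :=
        (ENNReal.ofReal_lt_iff_lt_toReal hs0.le (hft x)).mpr hx
      have hgy : ENNReal.ofReal s < g y :=
        (ENNReal.ofReal_lt_iff_lt_toReal hs0.le (hgt y)).mpr hy
      have hst : (ENNReal.ofReal s) ^ t ≠ 0 := by
        simp [ENNReal.rpow_eq_zero_iff, ENNReal.ofReal_eq_zero, hs0, not_le.mpr hs0]
      have hstt : (ENNReal.ofReal s) ^ t ≠ ⊤ := by
        simp [ENNReal.rpow_eq_top_iff, ENNReal.ofReal_eq_zero, not_le.mpr hs0]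
      have step : ENNReal.ofReal s < f x ^ (1-t) * g y ^ t := by
        calc ENNReal.ofReal s = ENNReal.ofReal s ^ (1-t) * ENNReal.ofReal s ^ t := by
              rw [← ENNReal.rpow_add _ _ (by simp [ENNReal.ofReal_eq_zero, not_le.mpr hs0])
                (by simp)]
              norm_num
          _ < f x ^ (1-t) * ENNReal.ofReal s ^ t := by
              exact (ENNReal.mul_lt_mul_left hst hstt)
                (ENNReal.rpow_lt_rpow hfx (by linarith))
          _ ≤ f x ^ (1-t) * g y ^ t :=
              mul_le_mul_right (ENNReal.rpow_le_rpow hgy.le ht0.le) _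
      have hmin : ENNReal.ofReal s < h' ((1-t) • x + t • y) :=
        lt_min (step.trans_le (hyp x y)) (ENNReal.ofReal_lt_one.mpr hs1)
      exact (ENNReal.ofReal_lt_iff_lt_toReal hs0.le (hht _)).mp hmin
    have hsmulX : MeasurableSet ((1-t) • {x | s < F x}) :=
      hXmeas.const_smul₀ ((1:ℝ)-t)
    have hsmulY : MeasurableSet (t • {x | s < G x}) :=
      hYmeas.const_smul₀ t
    calc ENNReal.ofReal (1-t) * volume {x | s < F x} + ENNReal.ofReal t * volume {x | s < G x}
        = volume ((1-t) • {x | s < F x}) + volume (t • {x | s < G x}) := by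
          rw [vol_smul_1d, vol_smul_1d, abs_of_pos (by linarith : (0:ℝ) < 1 - t),
            abs_of_pos ht0]
      _ ≤ volume ((1-t) • {x | s < F x} + t • {x | s < G x}) :=
          sum_meas_1d hsmulX hsmulY (hXne.smul_set) (hYne.smul_set)
      _ ≤ volume {x | s < H x} := measure_mono hsub
  -- integrate
  have hvolF : Measurable fun s : ℝ => volume {x | s < F x} :=
    Antitone.measurable (fun s s' hss' => measure_mono (fun x hx => lt_of_le_of_lt hss' hx))
  have hvolG : Measurable fun s : ℝ => volume {x | s < G x} :=
    Antitone.measurable (fun s s' hss' => measure_mono (fun x hx => lt_of_le_of_lt hss' hx))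
  have hFzero : ∀ s : ℝ, 1 ≤ s → volume {x | s < F x} = 0 := by
    intro s hs
    convert measure_empty
    · exact eq_empty_of_forall_notMem fun x hx =>
        absurd (lt_of_le_of_lt hs hx) (not_lt.mpr (by
          have := hf1 x
          exact ENNReal.toReal_le_of_le_ofReal zero_le_one (by simpa using this)))
    · infer_instance
  have hGzero : ∀ s : ℝ, 1 ≤ s → volume {x | s < G x} = 0 := by
    intro s hs
    convert measure_empty
    · exact eq_empty_of_forall_notMem fun x hx =>
        absurd (lt_of_le_of_lt hs hx) (not_lt.mpr (by
          have := hg1 x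
          exact ENNReal.toReal_le_of_le_ofReal zero_le_one (by simpa using this)))
    · infer_instance
  calc ENNReal.ofReal (1-t) * (∫⁻ x, f x) + ENNReal.ofReal t * (∫⁻ x, g x)
      = ENNReal.ofReal (1-t) * (∫⁻ s in Ioo (0:ℝ) 1, volume {x | s < F x})
        + ENNReal.ofReal t * (∫⁻ s in Ioo (0:ℝ) 1, volume {x | s < G x}) := by
        rw [layerf, layerg, ioi_eq_ioo_lintegral hFzero, ioi_eq_ioo_lintegral hGzero]
    _ = ∫⁻ s in Ioo (0:ℝ) 1, (ENNReal.ofReal (1-t) * volume {x | s < F x}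
        + ENNReal.ofReal t * volume {x | s < G x}) := by
        rw [← lintegral_const_mul' _ _ ENNReal.ofReal_ne_top,
          ← lintegral_const_mul' _ _ ENNReal.ofReal_ne_top,
          ← lintegral_add_left (hvolF.const_mul _)]
    _ ≤ ∫⁻ s in Ioo (0:ℝ) 1, volume {x | s < H x} :=
        setLIntegral_mono' measurableSet_Ioo key
    _ ≤ ∫⁻ s in Ioi (0:ℝ), volume {x | s < H x} :=
        lintegral_mono_set (Ioo_subset_Ioi_self)
    _ = ∫⁻ x, h' x := layerh.symm
    _ ≤ ∫⁻ x, h x := lintegral_mono fun x => min_le_left _ _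

lemma pl1 {t : ℝ} (ht0 : 0 < t) (ht1 : t < 1) {f g h : ℝ → ℝ≥0∞}
    (hf : Measurable f) (hg : Measurable g) (hh : Measurable h)
    {C : ℝ≥0∞} (hC : C ≠ ⊤) (hfC : ∀ x, f x ≤ C) (hgC : ∀ x, g x ≤ C)
    (hyp : ∀ x y, f x ^ (1 - t) * g y ^ t ≤ h ((1-t) • x + t • y)) :
    (∫⁻ x, f x) ^ (1-t) * (∫⁻ x, g x) ^ t ≤ ∫⁻ x, h x := by
  have h1t : (0:ℝ) < 1 - t := by linarith
  set Mf := ⨆ x, f x with hMf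
  set Mg := ⨆ x, g x with hMg
  have hMft : Mf ≠ ⊤ := ((iSup_le hfC).trans_lt hC.lt_top).ne
  have hMgt : Mg ≠ ⊤ := ((iSup_le hgC).trans_lt hC.lt_top).ne
  by_cases hMf0 : Mf = 0
  · have hfz : ∀ x, f x = 0 := fun x => le_antisymm ((le_iSup f x).trans hMf0.le) zero_le
    have : ∫⁻ x, f x = 0 := by simp [funext hfz]
    rw [this, ENNReal.zero_rpow_of_pos h1t, zero_mul]
    exact zero_le
  by_cases hMg0 : Mg = 0
  · have hgz : ∀ x, g x = 0 := fun x => le_antisymm ((le_iSup g x).trans hMg0.le) zero_le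
    have : ∫⁻ x, g x = 0 := by simp [funext hgz]
    rw [this, ENNReal.zero_rpow_of_pos ht0, mul_zero]
    exact zero_le
  have hMf1 : Mf ^ (1-t) ≠ 0 := by simp [ENNReal.rpow_eq_zero_iff, hMf0, hMft, h1t, not_lt.mpr h1t.le]
  have hMf1t : Mf ^ (1-t) ≠ ⊤ := by simp [ENNReal.rpow_eq_top_iff, hMf0, hMft, not_lt.mpr h1t.le]
  have hMg1 : Mg ^ t ≠ 0 := by simp [ENNReal.rpow_eq_zero_iff, hMg0, hMgt, not_lt.mpr ht0.le]
  have hMg1t : Mg ^ t ≠ ⊤ := by simp [ENNReal.rpow_eq_top_iff, hMg0, hMgt, not_lt.mpr ht0.le]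
  set c := Mf ^ (1-t) * Mg ^ t with hc
  have hc0 : c ≠ 0 := mul_ne_zero hMf1 hMg1
  have hctop : c ≠ ⊤ := ENNReal.mul_ne_top hMf1t hMg1t
  have hcinv : c⁻¹ = (Mf ^ (1-t))⁻¹ * (Mg ^ t)⁻¹ := ENNReal.mul_inv (Or.inl hMf1) (Or.inl hMf1t)
  set f' := fun x => f x * Mf⁻¹ with hf'
  set g' := fun x => g x * Mg⁻¹ with hg'
  set h' := fun x => h x * c⁻¹ with hh'
  have hsf' : (⨆ x, f' x) = 1 := by
    rw [hf', ← ENNReal.iSup_mul, ← hMf, ENNReal.mul_inv_cancel hMf0 hMft]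
  have hsg' : (⨆ x, g' x) = 1 := by
    rw [hg', ← ENNReal.iSup_mul, ← hMg, ENNReal.mul_inv_cancel hMg0 hMgt]
  have hyp' : ∀ x y, f' x ^ (1-t) * g' y ^ t ≤ h' ((1-t) • x + t • y) := by
    intro x y
    calc f' x ^ (1-t) * g' y ^ t
        = (f x ^ (1-t) * g y ^ t) * ((Mf ^ (1-t))⁻¹ * (Mg ^ t)⁻¹) := by
          rw [hf', hg', ENNReal.mul_rpow_of_nonneg _ _ h1t.le,
            ENNReal.mul_rpow_of_nonneg _ _ ht0.le, ENNReal.inv_rpow, ENNReal.inv_rpow]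
          ring
      _ ≤ h ((1-t) • x + t • y) * ((Mf ^ (1-t))⁻¹ * (Mg ^ t)⁻¹) :=
          mul_le_mul_left (hyp x y) _
      _ = h' ((1-t) • x + t • y) := by rw [hh', hcinv]
  have main := pl1_norm ht0 ht1 (hf.mul_const _) (hg.mul_const _) (hh.mul_const _) hsf' hsg' hyp'
  have geo := (ennreal_geom_le ht0 ht1 (∫⁻ x, f' x) (∫⁻ x, g' x)).trans main
  have hif : ∫⁻ x, f' x = (∫⁻ x, f x) * Mf⁻¹ :=
    lintegral_mul_const' _ _ (by simp [hMf0])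
  have hig : ∫⁻ x, g' x = (∫⁻ x, g x) * Mg⁻¹ :=
    lintegral_mul_const' _ _ (by simp [hMg0])
  have hih : ∫⁻ x, h' x = (∫⁻ x, h x) * c⁻¹ :=
    lintegral_mul_const' _ _ (by simp [hc0])
  rw [hif, hig, hih, ENNReal.mul_rpow_of_nonneg _ _ h1t.le,
    ENNReal.mul_rpow_of_nonneg _ _ ht0.le, ENNReal.inv_rpow, ENNReal.inv_rpow] at geo
  have geo' : ((∫⁻ x, f x) ^ (1-t) * (∫⁻ x, g x) ^ t) * c⁻¹ ≤ (∫⁻ x, h x) * c⁻¹ := by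
    calc ((∫⁻ x, f x) ^ (1-t) * (∫⁻ x, g x) ^ t) * c⁻¹
        = (∫⁻ x, f x) ^ (1-t) * (Mf ^ (1-t))⁻¹ * ((∫⁻ x, g x) ^ t * (Mg ^ t)⁻¹) := by
          rw [hcinv]; ring
      _ ≤ (∫⁻ x, h x) * c⁻¹ := geo
  exact (ENNReal.mul_le_mul_iff_left (by simp [hctop]) (by simp [hc0])).mp geo'

/-- The box `[-R, R]^n`. -/
def plBox (n : ℕ) (R : ℝ) : Set (Fin n → ℝ) := univ.pi fun _ => Icc (-R) R

lemma plBox_meas (n : ℕ) (R : ℝ) : MeasurableSet (plBox n R) :=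
  MeasurableSet.univ_pi fun _ => measurableSet_Icc

lemma plBox_vol_ne_top (n : ℕ) (R : ℝ) : volume (plBox n R) ≠ ⊤ := by
  rw [plBox, volume_pi_pi]
  exact ENNReal.prod_ne_top fun i _ => by simp [Real.volume_Icc]

lemma insertNth_combo {n : ℕ} (c d x₁ y₁ : ℝ) (x' y' : Fin n → ℝ) :
    (Fin.insertNth (α := fun _ => ℝ) 0 (c*x₁ + d*y₁) (c • x' + d • y'))
      = c • (Fin.insertNth (α := fun _ => ℝ) 0 x₁ x')
        + d • (Fin.insertNth (α := fun _ => ℝ) 0 y₁ y') := by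
  funext j
  refine Fin.succAboveCases 0 ?_ ?_ j
  · simp
  · intro j
    simp [Fin.insertNth_apply_succAbove]

lemma indicator_plBox_insertNth {n : ℕ} (R : ℝ) (x₁ : ℝ) (x' : Fin n → ℝ) :
    (plBox (n+1) R).indicator (1 : (Fin (n+1) → ℝ) → ℝ≥0∞) (Fin.insertNth 0 x₁ x')
      ≤ (plBox n R).indicator 1 x' := by
  by_cases hx : x' ∈ plBox n R
  · rw [indicator_of_mem hx]
    exact indicator_le_self' (fun _ _ => zero_le) _ |>.trans (by simp)
  · rw [indicator_of_notMem hx, indicator_of_notMem]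
    intro hmem
    exact hx (fun j _ => by
      simpa [Fin.insertNth_apply_succAbove] using hmem (Fin.succAbove 0 j) (mem_univ _))

theorem pl_pi : ∀ (n : ℕ) {t : ℝ}, 0 < t → t < 1 →
    ∀ {f g h : (Fin n → ℝ) → ℝ≥0∞}, Measurable f → Measurable g → Measurable h →
    ∀ {C : ℝ≥0∞}, C ≠ ⊤ → ∀ (R : ℝ),
    (∀ x, f x ≤ C * (plBox n R).indicator 1 x) →
    (∀ x, g x ≤ C * (plBox n R).indicator 1 x) →
    (∀ x y, f x ^ (1-t) * g y ^ t ≤ h ((1-t) • x + t • y)) →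
    (∫⁻ x, f x) ^ (1-t) * (∫⁻ x, g x) ^ t ≤ ∫⁻ x, h x := by
  intro n
  induction n with
  | zero =>
    intro t ht0 ht1 f g h hf hg hh C hC R hfC hgC hyp
    have huniv : volume (univ : Set (Fin 0 → ℝ)) = 1 := by
      rw [volume_pi, Measure.pi_univ]; simp
    have hconst : ∀ (k : (Fin 0 → ℝ) → ℝ≥0∞), ∫⁻ x, k x = k default := by
      intro k
      rw [show k = fun _ => k default from funext fun x => by rw [Subsingleton.elim x default],
        lintegral_const, huniv, mul_one]
    rw [hconst, hconst, hconst]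
    have := hyp default default
    rwa [Subsingleton.elim ((1-t) • (default : Fin 0 → ℝ) + t • default) default] at this
  | succ n ih =>
    intro t ht0 ht1 f g h hf hg hh C hC R hfC hgC hyp
    have h1t : (0:ℝ) < 1 - t := by linarith
    set e := MeasurableEquiv.piFinSuccAbove (fun _ : Fin (n+1) => ℝ) 0 with he
    have hesymm : ∀ (p : ℝ × (Fin n → ℝ)), e.symm p = Fin.insertNth 0 p.1 p.2 := by
      intro p
      rw [he, MeasurableEquiv.piFinSuccAbove_symm_apply]
      rfl
    have mp : MeasurePreserving (⇑e.symm) volume volume :=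
      (volume_preserving_piFinSuccAbove (fun _ : Fin (n+1) => ℝ) 0).symm e
    set f₁ : ℝ → ℝ≥0∞ := fun x₁ => ∫⁻ x', f (Fin.insertNth 0 x₁ x') with hf₁
    set g₁ : ℝ → ℝ≥0∞ := fun y₁ => ∫⁻ y', g (Fin.insertNth 0 y₁ y') with hg₁
    set h₁ : ℝ → ℝ≥0∞ := fun z₁ => ∫⁻ z', h (Fin.insertNth 0 z₁ z') with hh₁
    have huncurry : ∀ (k : (Fin (n+1) → ℝ) → ℝ≥0∞), Measurable k →
        Measurable (Function.uncurry fun x₁ (x' : Fin n → ℝ) => k (Fin.insertNth 0 x₁ x')) := by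
      intro k hk
      have : (Function.uncurry fun x₁ (x' : Fin n → ℝ) => k (Fin.insertNth 0 x₁ x'))
          = k ∘ ⇑e.symm := by
        funext p
        simp [Function.uncurry, hesymm]
      rw [this]
      exact hk.comp e.symm.measurable
    have hf₁m : Measurable f₁ := (huncurry f hf).lintegral_prod_right
    have hg₁m : Measurable g₁ := (huncurry g hg).lintegral_prod_right
    have hh₁m : Measurable h₁ := (huncurry h hh).lintegral_prod_right
    have hint : ∀ (k : (Fin (n+1) → ℝ) → ℝ≥0∞), Measurable k →
        ∫⁻ x, k x = ∫⁻ x₁, ∫⁻ x', k (Fin.insertNth 0 x₁ x') := by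
      intro k hk
      rw [← mp.lintegral_comp hk, Measure.volume_eq_prod,
        lintegral_prod (fun p => k (e.symm p)) ((hk.comp e.symm.measurable).aemeasurable)]
      simp only [hesymm]
    set C' := C * volume (plBox n R) with hC'
    have hC't : C' ≠ ⊤ := ENNReal.mul_ne_top hC (plBox_vol_ne_top n R)
    have hbound : ∀ (k : (Fin (n+1) → ℝ) → ℝ≥0∞),
        (∀ x, k x ≤ C * (plBox (n+1) R).indicator 1 x) →
        ∀ x₁, (∫⁻ x', k (Fin.insertNth 0 x₁ x')) ≤ C' := by
      intro k hkC x₁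
      calc (∫⁻ x', k (Fin.insertNth 0 x₁ x'))
          ≤ ∫⁻ x' : Fin n → ℝ, C * (plBox n R).indicator 1 x' :=
            lintegral_mono fun x' =>
              (hkC _).trans (mul_le_mul_right (indicator_plBox_insertNth R x₁ x') C)
        _ = C' := by
            rw [lintegral_const_mul' _ _ hC, lintegral_indicator_one (plBox_meas n R)]
    have hslice : ∀ (k : (Fin (n+1) → ℝ) → ℝ≥0∞), Measurable k → ∀ (x₁ : ℝ),
        Measurable fun x' : Fin n → ℝ => k (Fin.insertNth 0 x₁ x') := by
      intro k hk x₁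
      have : (fun x' : Fin n → ℝ => k (Fin.insertNth 0 x₁ x'))
          = (k ∘ ⇑e.symm) ∘ (Prod.mk x₁) := by
        funext x'
        simp [hesymm]
      rw [this]
      exact (hk.comp e.symm.measurable).comp measurable_prodMk_left
    have hyp₁ : ∀ x₁ y₁ : ℝ, f₁ x₁ ^ (1-t) * g₁ y₁ ^ t ≤ h₁ ((1-t) • x₁ + t • y₁) := by
      intro x₁ y₁
      have key := ih ht0 ht1 (hslice f hf x₁) (hslice g hg y₁)
        (hslice h hh ((1-t) * x₁ + t * y₁)) hC R
        (fun x' => (hfC _).trans (mul_le_mul_right (indicator_plBox_insertNth R x₁ x') C))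
        (fun y' => (hgC _).trans (mul_le_mul_right (indicator_plBox_insertNth R y₁ y') C))
        (fun x' y' => by
          rw [show ((1-t) • x' + t • y' : Fin n → ℝ) = (1-t) • x' + t • y' from rfl]
          have := hyp (Fin.insertNth 0 x₁ x') (Fin.insertNth 0 y₁ y')
          rwa [show ((1-t) • Fin.insertNth (α := fun _ => ℝ) 0 x₁ x'
              + t • Fin.insertNth (α := fun _ => ℝ) 0 y₁ y')
            = Fin.insertNth 0 ((1-t) * x₁ + t * y₁) ((1-t) • x' + t • y') from
            (insertNth_combo (1-t) t x₁ y₁ x' y').symm] at this)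
      have heq : ((1-t) • x₁ + t • y₁ : ℝ) = (1-t) * x₁ + t * y₁ := by
        simp [smul_eq_mul]
      rw [heq]
      exact key
    have final := pl1 ht0 ht1 hf₁m hg₁m hh₁m hC't
      (hbound f hfC) (hbound g hgC) hyp₁
    rw [hint f hf, hint g hg, hint h hh]
    exact final

lemma bm_mult_pi {n : ℕ} {t : ℝ} (ht0 : 0 < t) (ht1 : t < 1) {A B : Set (Fin n → ℝ)}
    (hA : IsCompact A) (hB : IsCompact B) :
    (volume A) ^ (1-t) * (volume B) ^ t ≤ volume ((1-t) • A + t • B) := by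
  have h1t : (0:ℝ) < 1 - t := by linarith
  -- find a box containing both A and B
  obtain ⟨rA, hrA⟩ := hA.isBounded.subset_closedBall 0
  obtain ⟨rB, hrB⟩ := hB.isBounded.subset_closedBall 0
  set R := max 0 (max rA rB) with hR
  have hR0 : 0 ≤ R := le_max_left _ _
  have hball : ∀ {S : Set (Fin n → ℝ)} {r : ℝ}, S ⊆ Metric.closedBall 0 r → r ≤ R →
      S ⊆ plBox n R := by
    intro S r hSr hrR z hz i _
    have : dist z 0 ≤ R := le_trans (hSr hz) hrR
    rw [dist_zero_right] at this
    have : ‖z i‖ ≤ R := le_trans (norm_le_pi_norm z i) this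
    rw [Real.norm_eq_abs, abs_le] at this
    exact ⟨this.1, this.2⟩
  have hAbox : A ⊆ plBox n R :=
    hball hrA ((le_max_left _ _).trans (le_max_right _ _))
  have hBbox : B ⊆ plBox n R :=
    hball hrB ((le_max_right _ _).trans (le_max_right _ _))
  set S := (1-t) • A + t • B with hS
  have hScomp : IsCompact S := ((hA.smul (1-t)).add (hB.smul t))
  have key := pl_pi n ht0 ht1
    (f := A.indicator 1) (g := B.indicator 1) (h := S.indicator 1)
    ((measurable_one).indicator hA.measurableSet)
    ((measurable_one).indicator hB.measurableSet)
    ((measurable_one).indicator hScomp.measurableSet)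
    (C := 1) ENNReal.one_ne_top R
    (fun x => by
      rw [one_mul]
      exact indicator_le_indicator_of_subset hAbox (fun _ => zero_le) x)
    (fun x => by
      rw [one_mul]
      exact indicator_le_indicator_of_subset hBbox (fun _ => zero_le) x)
    (fun x y => by
      by_cases hx : x ∈ A
      · by_cases hy : y ∈ B
        · have hmem : (1-t) • x + t • y ∈ S :=
            add_mem_add (smul_mem_smul_set hx) (smul_mem_smul_set hy)
          simp [indicator_of_mem hx, indicator_of_mem hy, indicator_of_mem hmem]
        · simp [indicator_of_notMem hy, ENNReal.zero_rpow_of_pos ht0]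
      · simp [indicator_of_notMem hx, ENNReal.zero_rpow_of_pos h1t])
  rwa [lintegral_indicator_one hA.measurableSet,
    lintegral_indicator_one hB.measurableSet,
    lintegral_indicator_one hScomp.measurableSet] at key

lemma vol_euc_pi {n : ℕ} (S : Set (EuclideanSpace ℝ (Fin n))) (hS : MeasurableSet S) :
    volume (WithLp.toLp 2 ⁻¹' S : Set (Fin n → ℝ)) = volume S :=
  (PiLp.volume_preserving_toLp (Fin n)).measure_preimage hS.nullMeasurableSet

lemma bm_mult_euc {n : ℕ} {t : ℝ} (ht0 : 0 < t) (ht1 : t < 1)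
    {A B : Set (EuclideanSpace ℝ (Fin n))} (hA : IsCompact A) (hB : IsCompact B) :
    (volume A) ^ (1-t) * (volume B) ^ t ≤ volume ((1-t) • A + t • B) := by
  have hA' : IsCompact (WithLp.toLp 2 ⁻¹' A : Set (Fin n → ℝ)) :=
    (PiLp.continuousLinearEquiv 2 ℝ (fun _ : Fin n => ℝ)).symm.toHomeomorph.isCompact_preimage.mpr hA
  have hB' : IsCompact (WithLp.toLp 2 ⁻¹' B : Set (Fin n → ℝ)) :=
    (PiLp.continuousLinearEquiv 2 ℝ (fun _ : Fin n => ℝ)).symm.toHomeomorph.isCompact_preimage.mpr hB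
  have key := bm_mult_pi ht0 ht1 hA' hB'
  rw [vol_euc_pi A hA.measurableSet, vol_euc_pi B hB.measurableSet] at key
  refine key.trans ?_
  rw [← vol_euc_pi _ ((hA.smul (1-t)).add (hB.smul t)).measurableSet]
  refine measure_mono ?_
  rintro _ ⟨_, ⟨a, ha, rfl⟩, _, ⟨b, hb, rfl⟩, rfl⟩
  exact ⟨_, ⟨_, ha, rfl⟩, _, ⟨_, hb, rfl⟩, by simp⟩

lemma vol_smul_euc {n : ℕ} (c : ℝ) (A : Set (EuclideanSpace ℝ (Fin n))) :
    volume (c • A) = ENNReal.ofReal (|c| ^ n) * volume A := by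
  have := Measure.addHaar_smul (volume : Measure (EuclideanSpace ℝ (Fin n))) c A
  rwa [finrank_euclideanSpace_fin, abs_pow] at this

lemma bm_add_euc {n : ℕ} (hn : n ≠ 0) {A B : Set (EuclideanSpace ℝ (Fin n))}
    (hA : IsCompact A) (hB : IsCompact B) (hAne : A.Nonempty) (hBne : B.Nonempty) :
    (volume A).toReal ^ (n:ℝ)⁻¹ + (volume B).toReal ^ (n:ℝ)⁻¹
      ≤ (volume (A + B)).toReal ^ (n:ℝ)⁻¹ := by
  have hninv : (0:ℝ) < (n:ℝ)⁻¹ := by positivity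
  have hABc : IsCompact (A + B) := hA.add hB
  have hABfin : volume (A + B) ≠ ⊤ := hABc.measure_lt_top.ne
  have hAfin : volume A ≠ ⊤ := hA.measure_lt_top.ne
  have hBfin : volume B ≠ ⊤ := hB.measure_lt_top.ne
  obtain ⟨a₀, ha₀⟩ := hAne
  obtain ⟨b₀, hb₀⟩ := hBne
  have htransA : volume B ≤ volume (A + B) := by
    calc volume B = volume (a₀ +ᵥ B) := (measure_vadd _ _ _).symm
      _ ≤ volume (A + B) := measure_mono (by rintro x ⟨y, hy, rfl⟩; exact add_mem_add ha₀ hy)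
  have htransB : volume A ≤ volume (A + B) := by
    calc volume A = volume (b₀ +ᵥ A) := (measure_vadd _ _ _).symm
      _ ≤ volume (A + B) := measure_mono (by
        rintro x ⟨y, hy, rfl⟩
        exact ⟨y, hy, b₀, hb₀, add_comm y b₀⟩)
  rcases eq_or_ne (volume A) 0 with hA0 | hA0
  · rw [hA0]
    simp only [ENNReal.toReal_zero, Real.zero_rpow hninv.ne', zero_add]
    exact Real.rpow_le_rpow ENNReal.toReal_nonneg (ENNReal.toReal_mono hABfin htransA) hninv.le
  rcases eq_or_ne (volume B) 0 with hB0 | hB0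
  · rw [hB0]
    simp only [ENNReal.toReal_zero, Real.zero_rpow hninv.ne', add_zero]
    exact Real.rpow_le_rpow ENNReal.toReal_nonneg (ENNReal.toReal_mono hABfin htransB) hninv.le
  set va := (volume A).toReal with hva
  set vb := (volume B).toReal with hvb
  have va0 : 0 < va := ENNReal.toReal_pos hA0 hAfin
  have vb0 : 0 < vb := ENNReal.toReal_pos hB0 hBfin
  set α := va ^ (n:ℝ)⁻¹ with hαdef
  set β := vb ^ (n:ℝ)⁻¹ with hβdef
  have hα : 0 < α := Real.rpow_pos_of_pos va0 _
  have hβ : 0 < β := Real.rpow_pos_of_pos vb0 _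
  have hαβ : 0 < α + β := by linarith
  set t := β / (α + β) with htdef
  have ht0 : 0 < t := div_pos hβ hαβ
  have ht1 : t < 1 := (div_lt_one hαβ).mpr (by linarith)
  have h1t : 1 - t = α / (α + β) := by
    rw [htdef]
    field_simp
    ring
  have e1 : (1 - t) * ((α + β) / α) = 1 := by
    rw [h1t]; field_simp
  have e2 : t * ((α + β) / β) = 1 := by
    rw [htdef]; field_simp
  have bm := bm_mult_euc ht0 ht1 (IsCompact.smul ((α+β)/α) hA) (IsCompact.smul ((α+β)/β) hB)
  rw [show (1-t) • (((α+β)/α) • A) + t • (((α+β)/β) • B) = A + B from by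
    rw [smul_smul, smul_smul, e1, e2, one_smul, one_smul]] at bm
  have hXfin : volume (((α+β)/α) • A) ≠ ⊤ := (IsCompact.smul _ hA).measure_lt_top.ne
  have hYfin : volume (((α+β)/β) • B) ≠ ⊤ := (IsCompact.smul _ hB).measure_lt_top.ne
  have hXr : (volume (((α+β)/α) • A)).toReal = ((α+β)/α)^n * va := by
    rw [vol_smul_euc, ENNReal.toReal_mul, ENNReal.toReal_ofReal (by positivity),
      abs_of_pos (div_pos hαβ hα), ← hva]
  have hYr : (volume (((α+β)/β) • B)).toReal = ((α+β)/β)^n * vb := by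
    rw [vol_smul_euc, ENNReal.toReal_mul, ENNReal.toReal_ofReal (by positivity),
      abs_of_pos (div_pos hαβ hβ), ← hvb]
  have hαn : α ^ n = va := Real.rpow_inv_natCast_pow va0.le hn
  have hβn : β ^ n = vb := Real.rpow_inv_natCast_pow vb0.le hn
  have hXval : (volume (((α+β)/α) • A)).toReal = (α+β)^n := by
    rw [hXr, ← hαn, ← mul_pow, div_mul_cancel₀ _ hα.ne']
  have hYval : (volume (((α+β)/β) • B)).toReal = (α+β)^n := by
    rw [hYr, ← hβn, ← mul_pow, div_mul_cancel₀ _ hβ.ne']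
  have bmr : ((α+β)^n) ^ (1-t) * ((α+β)^n) ^ t ≤ (volume (A+B)).toReal := by
    have hle := ENNReal.toReal_mono hABfin bm
    rwa [ENNReal.toReal_mul, ← ENNReal.toReal_rpow, ← ENNReal.toReal_rpow, hXval, hYval] at hle
  have hcomb : ((α+β)^n) ^ (1-t) * ((α+β)^n) ^ t = (α+β)^n := by
    rw [← Real.rpow_add (by positivity), sub_add_cancel, Real.rpow_one]
  rw [hcomb] at bmr
  calc α + β = (((α+β)^n) ^ (n:ℝ)⁻¹) := (Real.pow_rpow_inv_natCast hαβ.le hn).symm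
    _ ≤ (volume (A+B)).toReal ^ (n:ℝ)⁻¹ := Real.rpow_le_rpow (by positivity) bmr hninv.le

theorem intersection_volume_concave (n : ℕ) (K L : Set (EuclideanSpace ℝ (Fin n)))
    (hK : IsCompact K) (hKc : Convex ℝ K) (hKi : (interior K).Nonempty)
    (hL : IsCompact L) (hLc : Convex ℝ L) (hLi : (interior L).Nonempty) :
    ConcaveOn ℝ (K + L)
      (fun x => (volume (K ∩ ({x} - L))).toReal ^ ((n : ℝ)⁻¹)) := by
  rcases Nat.eq_zero_or_pos n with hn0 | hn
  · subst hn0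
    have : (fun x : EuclideanSpace ℝ (Fin 0) =>
        (volume (K ∩ ({x} - L))).toReal ^ ((0:ℕ) : ℝ)⁻¹) = fun _ => (1:ℝ) := by
      funext x
      norm_num
    rw [this]
    exact concaveOn_const 1 (hKc.add hLc)
  have hn' : n ≠ 0 := hn.ne'
  have hninv : (0:ℝ) < (n:ℝ)⁻¹ := by positivity
  have hsubc : ∀ z : EuclideanSpace ℝ (Fin n), IsCompact ({z} - L) := fun z => by
    rw [Set.singleton_sub]
    exact hL.image (continuous_const.sub continuous_id)
  refine ⟨hKc.add hLc, ?_⟩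
  intro x hx y hy a b ha hb hab
  rcases ha.eq_or_lt with heq | ha0
  · rw [← heq] at hab ⊢
    rw [zero_add] at hab
    subst hab
    simp
  rcases hb.eq_or_lt with heq | hb0
  · rw [← heq] at hab ⊢
    rw [add_zero] at hab
    subst hab
    simp
  set A := K ∩ ({x} - L) with hAdef
  set B := K ∩ ({y} - L) with hBdef
  have hAc : IsCompact A := hK.inter_right (hsubc x).isClosed
  have hBc : IsCompact B := hK.inter_right (hsubc y).isClosed
  have hAne : A.Nonempty := by
    obtain ⟨k, hk, l, hl, rfl⟩ := hx
    exact ⟨k, hk, k + l, mem_singleton _, l, hl, add_sub_cancel_right k l⟩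
  have hBne : B.Nonempty := by
    obtain ⟨k, hk, l, hl, rfl⟩ := hy
    exact ⟨k, hk, k + l, mem_singleton _, l, hl, add_sub_cancel_right k l⟩
  have hincl : a • A + b • B ⊆ K ∩ ({a • x + b • y} - L) := by
    rintro u ⟨p', ⟨p, hp, rfl⟩, q', ⟨q, hq, rfl⟩, rfl⟩
    refine ⟨hKc hp.1 hq.1 ha0.le hb0.le hab, ?_⟩
    obtain ⟨x'', hx'', l₁, hl₁, hpx⟩ := hp.2
    obtain ⟨y'', hy'', l₂, hl₂, hqy⟩ := hq.2
    rw [mem_singleton_iff] at hx'' hy''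
    rw [hx''] at hpx
    rw [hy''] at hqy
    refine ⟨a • x + b • y, mem_singleton _, a • l₁ + b • l₂,
      hLc hl₁ hl₂ ha0.le hb0.le hab, ?_⟩
    rw [← hpx, ← hqy]
    simp only [smul_sub]
    abel
  have hsmulval : ∀ (c : ℝ), 0 < c → ∀ (S : Set (EuclideanSpace ℝ (Fin n))),
      (volume (c • S)).toReal ^ (n:ℝ)⁻¹ = c * (volume S).toReal ^ (n:ℝ)⁻¹ := by
    intro c hc S
    rw [vol_smul_euc, ENNReal.toReal_mul, ENNReal.toReal_ofReal (by positivity),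
      Real.mul_rpow (by positivity) ENNReal.toReal_nonneg, abs_of_pos hc,
      Real.pow_rpow_inv_natCast hc.le hn']
  have key := bm_add_euc hn' (IsCompact.smul a hAc) (IsCompact.smul b hBc)
    (hAne.smul_set) (hBne.smul_set)
  rw [hsmulval a ha0 A, hsmulval b hb0 B] at key
  have hbig : IsCompact (K ∩ ({a • x + b • y} - L)) :=
    hK.inter_right (hsubc _).isClosed
  have hmono : (volume (a • A + b • B)).toReal ^ (n:ℝ)⁻¹
      ≤ (volume (K ∩ ({a • x + b • y} - L))).toReal ^ (n:ℝ)⁻¹ :=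
    Real.rpow_le_rpow ENNReal.toReal_nonneg
      (ENNReal.toReal_mono hbig.measure_lt_top.ne (measure_mono hincl)) hninv.le
  calc a • (volume A).toReal ^ (n:ℝ)⁻¹ + b • (volume B).toReal ^ (n:ℝ)⁻¹
      ≤ (volume (a • A + b • B)).toReal ^ (n:ℝ)⁻¹ := by
        simpa [smul_eq_mul] using key
    _ ≤ (volume (K ∩ ({a • x + b • y} - L))).toReal ^ (n:ℝ)⁻¹ := hmono
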